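/- Let H be a complex Hilbert space, 𝔜 a Hausdorff topological vector space over ℂ, and Φ : H → 𝔜 a continuous injective linear map with dense range. Let S be a bounded normal operator on H, and let T_1, T_2 be continuous linear operators on 𝔜 such that T_1 ∘ Φ = Φ ∘ S and T_2 ∘ Φ = Φ ∘ S*. Assume ker S ∩ cl(Φ⁻¹(T_2(𝔜))) = {0}, where Φ⁻¹(M) = {x ∈ H : Φx ∈ M} and cl denotes norm closure in H. Then for every y ∈ 𝔜 such that T_1 y = Φ x_1 and T_2 y = Φ x_2 for some x_1, x_2 ∈ H, one has ‖x_2‖ ≤ ‖x_1‖. -/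

import Mathlib

open ContinuousLinearMap

/-- Let `Φ : H → 𝔜` be a continuous injective linear map with dense range from a Hilbert
space `H`, intertwining a normal operator `S` with `T₁` and its adjoint `S*` with `T₂`.
If `ker S ∩ closure (Φ⁻¹ (T₂ 𝔜)) = {0}`, then whenever `T₁ y = Φ x₁` and `T₂ y = Φ x₂`
one has `‖x₂‖ ≤ ‖x₁‖`. -/
theorem norm_le_of_intertwining_normal
    {H : Type*} [NormedAddCommGroup H] [InnerProductSpace ℂ H] [CompleteSpace H]
    {𝔜 : Type*} [AddCommGroup 𝔜] [Module ℂ 𝔜] [TopologicalSpace 𝔜]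
    [IsTopologicalAddGroup 𝔜] [ContinuousSMul ℂ 𝔜] [T2Space 𝔜]
    (Φ : H →L[ℂ] 𝔜) (hΦinj : Function.Injective Φ) (hΦdr : DenseRange Φ)
    (S : H →L[ℂ] H) (hS : adjoint S ∘L S = S ∘L adjoint S)
    (T₁ T₂ : 𝔜 →L[ℂ] 𝔜)
    (h₁ : ∀ x, T₁ (Φ x) = Φ (S x))
    (h₂ : ∀ x, T₂ (Φ x) = Φ (adjoint S x))
    (hker : ∀ x : H, S x = 0 → x ∈ closure (⇑Φ ⁻¹' Set.range T₂) → x = 0)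
    (y : 𝔜) (x₁ x₂ : H) (hx₁ : T₁ y = Φ x₁) (hx₂ : T₂ y = Φ x₂) :
    ‖x₂‖ ≤ ‖x₁‖ := by
  -- Normality: ‖S h‖ = ‖S* h‖ for all h
  have hnorm : ∀ h : H, ‖adjoint S h‖ = ‖S h‖ := by
    intro h
    have h1 : (inner ℂ (S h) (S h) : ℂ) = inner ℂ (adjoint S h) (adjoint S h) := by
      calc (inner ℂ (S h) (S h) : ℂ)
          = inner ℂ h (adjoint S (S h)) := (adjoint_inner_right S h (S h)).symm
        _ = inner ℂ h (S (adjoint S h)) := by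
            rw [show (adjoint S) (S h) = (S ∘L adjoint S) h from
              congrFun (congrArg DFunLike.coe hS) h]; rfl
        _ = inner ℂ (adjoint S h) (adjoint S h) := (adjoint_inner_left S (adjoint S h) h).symm
    rw [inner_self_eq_norm_sq_to_K (𝕜 := ℂ), inner_self_eq_norm_sq_to_K (𝕜 := ℂ)] at h1
    have h2 : ‖S h‖ ^ 2 = ‖adjoint S h‖ ^ 2 := by exact_mod_cast h1
    nlinarith [norm_nonneg (S h), norm_nonneg (adjoint S h)]
  -- T₁ and T₂ commute
  have hcomm : ∀ z : 𝔜, T₁ (T₂ z) = T₂ (T₁ z) := by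
    have heq : (⇑T₁ ∘ ⇑T₂) = (⇑T₂ ∘ ⇑T₁) := by
      apply hΦdr.equalizer (T₁.continuous.comp T₂.continuous)
        (T₂.continuous.comp T₁.continuous)
      funext x
      simp only [Function.comp_apply, h₁, h₂]
      rw [show S ((adjoint S) x) = (S ∘L adjoint S) x from rfl, ← hS]
      rfl
    intro z; exact congrFun heq z
  -- key identity : S x₂ = S* x₁
  have hkey : S x₂ = adjoint S x₁ := by
    apply hΦinj
    rw [← h₁, ← h₂, ← hx₂, ← hx₁, hcomm]
  -- the closure of Φ⁻¹(range T₂) as a submodule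
  set K : Submodule ℂ H :=
    ((LinearMap.range (T₂ : 𝔜 →ₗ[ℂ] 𝔜)).comap (Φ : H →ₗ[ℂ] 𝔜)).topologicalClosure with hK
  have hKset : (K : Set H) = closure (⇑Φ ⁻¹' Set.range T₂) := by
    rw [hK, Submodule.topologicalClosure_coe]
    congr 1
  -- range of S* and its closure
  set R : Submodule ℂ H := LinearMap.range (adjoint S : H →ₗ[ℂ] H) with hR
  set Rc : Submodule ℂ H := R.topologicalClosure with hRc
  have hRK : Rc ≤ K := by
    apply Submodule.topologicalClosure_mono
    rintro v ⟨h, rfl⟩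
    exact ⟨Φ h, h₂ h⟩
  have hx₂K : x₂ ∈ K := by
    rw [← SetLike.mem_coe, hKset]
    exact subset_closure ⟨y, hx₂⟩
  -- decompose x₂ via orthogonal projection onto Rc
  haveI : CompleteSpace Rc := R.isClosed_topologicalClosure.completeSpace_coe
  set p : H := (Rc.orthogonalProjectionOnto x₂ : H) with hp
  have hdiff : x₂ - p ∈ Rcᗮ := Submodule.sub_starProjection_mem_orthogonal (K := Rc) x₂
  have hdiffK : x₂ - p ∈ K := K.sub_mem hx₂K (hRK (Rc.orthogonalProjectionOnto x₂).2)
  have hSdiff : S (x₂ - p) = 0 := by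
    have horth : ∀ h : H, (inner ℂ h (S (x₂ - p)) : ℂ) = 0 := by
      intro h
      rw [← adjoint_inner_left]
      exact hdiff _ (Submodule.le_topologicalClosure R ⟨h, rfl⟩)
    have := horth (S (x₂ - p))
    rwa [inner_self_eq_zero] at this
  have hzero : x₂ - p = 0 := by
    apply hker _ hSdiff
    rw [← hKset]; exact hdiffK
  have hx₂Rc : x₂ ∈ Rc := by
    have : x₂ = p := by rwa [sub_eq_zero] at hzero
    rw [this]; exact (Rc.orthogonalProjectionOnto x₂).2
  -- the main estimate on range S*
  have hbound : ∀ u ∈ R, ‖(inner ℂ x₂ u : ℂ)‖ ≤ ‖x₁‖ * ‖u‖ := by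
    rintro u ⟨h, rfl⟩
    simp only [ContinuousLinearMap.coe_coe]
    have heq : (inner ℂ x₂ (adjoint S h) : ℂ) = inner ℂ x₁ (S h) := by
      rw [adjoint_inner_right, hkey, adjoint_inner_left]
    rw [heq, hnorm h]
    exact norm_inner_le_norm x₁ (S h)
  -- take a sequence in R converging to x₂
  have hx₂cl : x₂ ∈ closure (R : Set H) := by
    rw [← Submodule.topologicalClosure_coe]; exact hx₂Rc
  obtain ⟨u, huR, hul⟩ := mem_closure_iff_seq_limit.mp hx₂cl
  have hlim1 : Filter.Tendsto (fun n => ‖(inner ℂ x₂ (u n) : ℂ)‖) Filter.atTop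
      (nhds ‖(inner ℂ x₂ x₂ : ℂ)‖) :=
    ((continuous_norm.comp (continuous_const.inner continuous_id)).continuousAt).tendsto.comp hul
  have hlim2 : Filter.Tendsto (fun n => ‖x₁‖ * ‖u n‖) Filter.atTop (nhds (‖x₁‖ * ‖x₂‖)) :=
    (continuous_const.mul continuous_norm).continuousAt.tendsto.comp hul
  have hineq : ‖(inner ℂ x₂ x₂ : ℂ)‖ ≤ ‖x₁‖ * ‖x₂‖ :=
    le_of_tendsto_of_tendsto' hlim1 hlim2 fun n => hbound (u n) (huR n)
  rw [inner_self_eq_norm_sq_to_K (𝕜 := ℂ)] at hineq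
  have hineq' : ‖x₂‖ * ‖x₂‖ ≤ ‖x₁‖ * ‖x₂‖ := by
    have : ‖x₂‖ ^ 2 ≤ ‖x₁‖ * ‖x₂‖ := by
      simpa [norm_pow] using hineq
    nlinarith
  rcases eq_or_lt_of_le (norm_nonneg x₂) with h0 | h0
  · rw [← h0]; exact norm_nonneg x₁
  · exact le_of_mul_le_mul_right hineq' h0
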